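/- (Key computation for Theorem 3.3.) Let λ ∈ ℂ with λ_i = Im λ > 0, let g ∈ H, and define f(s) = e^{−i \overline{λ} s} exp(isA) g for s ≥ b, where \overline{λ} is the complex conjugate of λ. Then ∫_b^{∞} ‖f(s)‖² ds = e^{−2λ_i b} ‖g‖² / (2λ_i), and the function u(t) = i ∫_t^{∞} e^{−iλ(t−s)} exp(i(t−s)A) f(s) ds satisfies ∫_b^{∞} ‖u(t)‖² dt = e^{−2λ_i b} ‖g‖² / (8 λ_i³). Consequently, if g ≠ 0 then ‖u‖_{L²([b,∞);H)} = (1/(2λ_i)) ‖f‖_{L²([b,∞);H)}; in particular the resolvent of the extension has operator norm at least 1/(2 Im λ) at every λ with Im λ > 0. -/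

import Mathlib

open MeasureTheory Set Complex
open scoped InnerProductSpace

/-- The operator exponential `exp(iτA)` for a bounded operator `A` and `τ ∈ ℝ`. -/
noncomputable def expIA {H : Type*} [NormedAddCommGroup H] [InnerProductSpace ℂ H]
    [CompleteSpace H] (A : H →L[ℂ] H) (τ : ℝ) : H →L[ℂ] H :=
  NormedSpace.exp ((Complex.I * (τ : ℂ)) • A)

lemma integral_exp_neg_mul_Ioi {c : ℝ} (hc : 0 < c) (a : ℝ) :
    ∫ x in Set.Ioi a, Real.exp (-c * x) = Real.exp (-c * a) / c := by
  have hderiv : ∀ x ∈ Set.Ici a,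
      HasDerivAt (fun y : ℝ => -Real.exp (-c * y) / c) (Real.exp (-c * x)) x := by
    intro x _
    have h1 : HasDerivAt (fun y : ℝ => -c * y) (-c) x := by
      simpa using (hasDerivAt_id x).const_mul (-c)
    have h2 : HasDerivAt (fun y : ℝ => Real.exp (-c * y)) (Real.exp (-c * x) * (-c)) x :=
      (Real.hasDerivAt_exp _).comp x h1
    have h3 := (h2.neg).div_const c
    convert h3 using 1
    case e'_9 => rw [mul_neg, neg_neg, mul_div_assoc, div_self hc.ne', mul_one]
    all_goals rfl
  have hint : IntegrableOn (fun x : ℝ => Real.exp (-c * x)) (Set.Ioi a) :=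
    exp_neg_integrableOn_Ioi a hc
  have htend : Filter.Tendsto (fun y : ℝ => -Real.exp (-c * y) / c) Filter.atTop (nhds 0) := by
    have h0 : Filter.Tendsto (fun y : ℝ => -c * y) Filter.atTop Filter.atBot :=
      (Filter.tendsto_const_mul_atBot_of_neg (neg_lt_zero.mpr hc)).2 Filter.tendsto_id
    have : Filter.Tendsto (fun y : ℝ => Real.exp (-c * y)) Filter.atTop (nhds 0) :=
      Real.tendsto_exp_atBot.comp h0
    have := (this.neg).div_const c
    simpa using this
  have := MeasureTheory.integral_Ioi_of_hasDerivAt_of_tendsto' hderiv hint htend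
  rw [this]
  field_simp
  ring

lemma expIA_mem_unitary {H : Type*} [NormedAddCommGroup H] [InnerProductSpace ℂ H]
    [CompleteSpace H] (A : H →L[ℂ] H) (hA : IsSelfAdjoint A) (τ : ℝ) :
    expIA A τ ∈ unitary (H →L[ℂ] H) := by
  let +nondep : NormedAlgebra ℚ (H →L[ℂ] H) := NormedAlgebra.restrictScalars ℚ ℂ _
  apply NormedSpace.exp_mem_unitary_of_mem_skewAdjoint
  rw [skewAdjoint.mem_iff, star_smul, hA.star_eq]
  rw [← neg_smul]
  congr 1
  simp [Complex.ext_iff]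

lemma expIA_norm {H : Type*} [NormedAddCommGroup H] [InnerProductSpace ℂ H]
    [CompleteSpace H] (A : H →L[ℂ] H) (hA : IsSelfAdjoint A) (τ : ℝ) (x : H) :
    ‖expIA A τ x‖ = ‖x‖ :=
  ContinuousLinearMap.norm_map_of_mem_unitary (expIA_mem_unitary A hA τ) x

lemma expIA_add {H : Type*} [NormedAddCommGroup H] [InnerProductSpace ℂ H]
    [CompleteSpace H] (A : H →L[ℂ] H) (σ τ : ℝ) :
    expIA A (σ + τ) = expIA A σ * expIA A τ := by
  unfold expIA
  let +nondep : NormedAlgebra ℚ (H →L[ℂ] H) := NormedAlgebra.restrictScalars ℚ ℂ _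
  rw [← NormedSpace.exp_add_of_commute (((Commute.refl A).smul_left _).smul_right _)]
  congr 1
  rw [Complex.ofReal_add, mul_add, add_smul]

/-- Key computation for Theorem 3.3: with `f(s) = e^{−i conj(λ) s} exp(isA) g` and
`u(t) = i ∫_t^∞ e^{−iλ(t−s)} exp(i(t−s)A) f(s) ds` one has
`∫_b^∞ ‖f‖² = e^{−2 Im λ b}‖g‖²/(2 Im λ)`, `∫_b^∞ ‖u‖² = e^{−2 Im λ b}‖g‖²/(8 (Im λ)³)`,
hence `‖u‖_{L²} = (1/(2 Im λ)) ‖f‖_{L²}` when `g ≠ 0`, so the resolvent has norm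
at least `1/(2 Im λ)`. -/
theorem resolvent_lower_bound_computation
    {H : Type*} [NormedAddCommGroup H] [InnerProductSpace ℂ H] [CompleteSpace H]
    (A : H →L[ℂ] H) (hA : IsSelfAdjoint A) (b : ℝ) (lam : ℂ) (hlam : 0 < lam.im)
    (g : H) (f u : ℝ → H)
    (hf : f = fun s : ℝ =>
      Complex.exp (-Complex.I * (starRingEnd ℂ) lam * (s : ℂ)) • (expIA A s) g)
    (hu : u = fun t : ℝ => Complex.I • ∫ s in Set.Ioi t,
      Complex.exp (-Complex.I * lam * ((t : ℂ) - (s : ℂ))) • (expIA A (t - s)) (f s)) :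
    (∫ s in Set.Ioi b, ‖f s‖ ^ 2) = Real.exp (-2 * lam.im * b) * ‖g‖ ^ 2 / (2 * lam.im)
    ∧ (∫ t in Set.Ioi b, ‖u t‖ ^ 2) = Real.exp (-2 * lam.im * b) * ‖g‖ ^ 2 / (8 * lam.im ^ 3)
    ∧ (g ≠ 0 →
        eLpNorm u 2 (volume.restrict (Set.Ici b))
          = ENNReal.ofReal (1 / (2 * lam.im)) * eLpNorm f 2 (volume.restrict (Set.Ici b))) := by
  have h2 : (0:ℝ) < 2 * lam.im := by linarith
  -- pointwise norm of f
  have hfn : ∀ s : ℝ, ‖f s‖ = Real.exp (-lam.im * s) * ‖g‖ := by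
    intro s
    rw [hf]
    simp only [norm_smul, expIA_norm A hA]
    congr 1
    rw [Complex.norm_exp]
    congr 1
    simp [Complex.mul_re, Complex.mul_im]
    try ring
  have hfsq : ∀ s : ℝ, ‖f s‖ ^ 2 = Real.exp (-(2 * lam.im) * s) * ‖g‖ ^ 2 := by
    intro s
    rw [hfn, mul_pow, pow_two, ← Real.exp_add]
    congr 2
    ring
  have hIf : (∫ s in Set.Ioi b, ‖f s‖ ^ 2)
      = Real.exp (-2 * lam.im * b) * ‖g‖ ^ 2 / (2 * lam.im) := by
    simp only [hfsq]
    rw [MeasureTheory.integral_mul_const, integral_exp_neg_mul_Ioi h2 b]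
    rw [show -(2 * lam.im) * b = -2 * lam.im * b by ring]
    ring
  -- u = (I / (2 * lam.im)) • f pointwise
  have hue : ∀ t : ℝ, u t = (Complex.I / (2 * (lam.im : ℂ))) • f t := by
    intro t
    rw [hu]
    simp only
    have hintg : ∀ s : ℝ,
        Complex.exp (-Complex.I * lam * ((t : ℂ) - (s : ℂ))) • (expIA A (t - s)) (f s)
        = (Complex.exp (-Complex.I * (starRingEnd ℂ) lam * (t : ℂ))
            * (Real.exp (2 * lam.im * (t - s)) : ℂ)) • (expIA A t) g := by
      intro s
      rw [hf]
      simp only [_root_.map_smul, smul_smul]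
      have hop : (expIA A (t - s)) ((expIA A s) g) = (expIA A t) g := by
        rw [← ContinuousLinearMap.mul_apply, ← expIA_add]
        norm_num
      rw [hop]
      congr 1
      rw [Complex.ofReal_exp, ← Complex.exp_add, ← Complex.exp_add]
      congr 1
      apply Complex.ext <;>
        simp [Complex.mul_re, Complex.mul_im, Complex.sub_re, Complex.sub_im] <;> ring
    simp only [hintg]
    rw [integral_smul_const, MeasureTheory.integral_const_mul]
    have hR : (∫ s in Set.Ioi t, Real.exp (2 * lam.im * (t - s))) = 1 / (2 * lam.im) := by
      have : ∀ s : ℝ, Real.exp (2 * lam.im * (t - s))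
          = Real.exp (2 * lam.im * t) * Real.exp (-(2 * lam.im) * s) := by
        intro s; rw [← Real.exp_add]; congr 1; ring
      simp only [this]
      rw [MeasureTheory.integral_const_mul, integral_exp_neg_mul_Ioi h2 t,
        ← mul_div_assoc, ← Real.exp_add]
      rw [show 2 * lam.im * t + -(2 * lam.im) * t = 0 by ring]
      simp
    have hreal : (∫ s in Set.Ioi t, ((Real.exp (2 * lam.im * (t - s)) : ℝ) : ℂ))
        = ((1 / (2 * lam.im) : ℝ) : ℂ) := by
      rw [← hR]
      exact integral_ofReal
    rw [hreal, hf]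
    simp only [smul_smul]
    congr 1
    have hne : ((lam.im : ℂ)) ≠ 0 := by
      exact_mod_cast ne_of_gt hlam
    push_cast
    field_simp
    try ring
  -- norm of the scalar
  have hcn : ‖Complex.I / (2 * (lam.im : ℂ))‖ = 1 / (2 * lam.im) := by
    rw [norm_div, Complex.norm_I]
    congr 1
    rw [show (2 * (lam.im : ℂ)) = ((2 * lam.im : ℝ) : ℂ) by push_cast; ring]
    rw [Complex.norm_real, Real.norm_eq_abs, abs_of_pos h2]
  have hun : ∀ t : ℝ, ‖u t‖ ^ 2 = (1 / (2 * lam.im)) ^ 2 * ‖f t‖ ^ 2 := by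
    intro t
    rw [hue, norm_smul, hcn, mul_pow]
  refine ⟨hIf, ?_, ?_⟩
  · simp only [hun]
    rw [MeasureTheory.integral_const_mul, hIf, div_pow, one_pow, div_mul_div_comm, one_mul]
    congr 1
    ring
  · intro _
    have hueq : u = (Complex.I / (2 * (lam.im : ℂ))) • f := by
      funext t; rw [hue]; rfl
    rw [hueq, eLpNorm_const_smul]
    congr 1
    rw [← ofReal_norm, hcn]
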